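/- Let α and β be finite nonempty alphabets and let A be a finite deterministic parity automaton over the alphabet α × β, and let W ⊆ (ℕ → α) × (ℕ → β) be the relation it defines, i.e., (x, y) ∈ W iff A accepts the ω-word n ↦ (x n, y n). Then either there is a finite-state causal operator F : (ℕ → α) → (ℕ → β) such that (X, F X) ∈ W for every X, or there is a finite-state strongly causal operator G : (ℕ → β) → (ℕ → α) such that (G Y, Y) ∉ W for every Y. -/

import Mathlib

/-- An operator `F` between ω-sequences is *causal* (a C-operator) if
`F x t` depends only on `x 0, …, x t`. -/
def Causal {α β : Type} (F : (ℕ → α) → (ℕ → β)) : Prop :=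
  ∀ x y : ℕ → α, ∀ t : ℕ, (∀ s ≤ t, x s = y s) → ∀ s ≤ t, F x s = F y s

/-- An operator `F` between ω-sequences is *strongly causal* (an SC-operator) if
`F x t` depends only on `x 0, …, x (t−1)`. -/
def StronglyCausal {α β : Type} (F : (ℕ → α) → (ℕ → β)) : Prop :=
  ∀ x y : ℕ → α, ∀ t : ℕ, (∀ s < t, x s = y s) → F x t = F y t

/-- A causal operator is *finite state* if it is computed by a Moore automaton
with a finite state set. -/
def FiniteStateCausal {α β : Type} (F : (ℕ → α) → (ℕ → β)) : Prop :=
  ∃ (Q : Type) (_ : Fintype Q) (δ : Q → α → Q) (q₀ : Q) (out : Q → α → β),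
    ∀ (x : ℕ → α) (n : ℕ),
      F x n = out (((List.range n).map x).foldl δ q₀) (x n)

/-- A strongly causal operator is *finite state* if it is computed by a Mealey
automaton with a finite state set. -/
def FiniteStateStronglyCausal {α β : Type} (F : (ℕ → α) → (ℕ → β)) : Prop :=
  ∃ (Q : Type) (_ : Fintype Q) (δ : Q → α → Q) (q₀ : Q) (out : Q → β),
    ∀ (x : ℕ → α) (n : ℕ),
      F x n = out (((List.range n).map x).foldl δ q₀)

/-- Acceptance by a deterministic parity automaton `(Q, δ, q₀, col)`: the
minimal color of a state visited infinitely often along the run on the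
ω-word `a` is even. -/
def ParityAccepts {Q σ : Type*} (δ : Q → σ → Q) (q₀ : Q) (col : Q → ℕ)
    (a : ℕ → σ) : Prop :=
  Even (sInf {k | ∃ q, {n | ((List.range (n + 1)).map a).foldl δ q₀ = q}.Infinite ∧
    col q = k})

set_option linter.unusedSectionVars false
set_option linter.unusedVariables false

namespace BL

open Classical Set

noncomputable section

/-! ### Infinitely occurring values -/

def InfOcc {V : Type} (π : ℕ → V) : Set V := {v | {n | π n = v}.Infinite}

lemma infOcc_tail {V : Type} (π : ℕ → V) (k : ℕ) :
    InfOcc (fun n => π (n + k)) = InfOcc π := by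
  ext v
  constructor
  · intro h
    have h2 : ((fun n => n + k) '' {n | π (n + k) = v}).Infinite :=
      h.image (fun a _ b _ hab => by omega)
    exact h2.mono (by rintro m ⟨n, hn, rfl⟩; exact hn)
  · intro h
    have hsub : {n | π n = v} ⊆ ((fun n => n + k) '' {n | π (n + k) = v}) ∪ Set.Iio k := by
      intro m hm
      rcases lt_or_ge m k with h1 | h1
      · exact Or.inr h1
      · exact Or.inl ⟨m - k, by simpa [Nat.sub_add_cancel h1] using hm, Nat.sub_add_cancel h1⟩
    have hinf : ((fun n => n + k) '' {n | π (n + k) = v}).Infinite := by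
      by_contra hfin
      rw [Set.not_infinite] at hfin
      exact h (Set.Finite.subset (hfin.union (Set.finite_Iio k)) hsub)
    exact Set.Infinite.of_image _ hinf

lemma exists_infOcc_mem {V : Type} (π : ℕ → V) (N : Set V) (hN : N.Finite)
    (h : {n | π n ∈ N}.Infinite) : ∃ v ∈ N, v ∈ InfOcc π := by
  by_contra hc
  push_neg at hc
  have hsub : {n | π n ∈ N} ⊆ ⋃ v ∈ N, {n | π n = v} := fun n hn => Set.mem_biUnion hn rfl
  have hfin : (⋃ v ∈ N, {n | π n = v}).Finite :=
    hN.biUnion (fun v hv => Set.not_infinite.1 (hc v hv))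
  exact h (hfin.subset hsub)


/-! ### Parity games -/

section Game

variable {V : Type} [Fintype V] (own : V → Bool) (E : V → V → Prop) (col : V → ℕ)

def Subarena (S : Set V) : Prop := ∀ v ∈ S, ∃ w ∈ S, E v w

def minCol (π : ℕ → V) : ℕ := sInf (col '' InfOcc π)

def WinFor (p : Bool) (π : ℕ → V) : Prop := Even (minCol col π) ↔ p = true

def Consistent (S : Set V) (p : Bool) (σ : V → V) (π : ℕ → V) : Prop :=
  (∀ n, π n ∈ S) ∧ (∀ n, E (π n) (π (n + 1))) ∧ (∀ n, own (π n) = p → π (n + 1) = σ (π n))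

def WinsIn (S : Set V) (p : Bool) (σ : V → V) (v : V) : Prop :=
  ∀ π, π 0 = v → Consistent own E S p σ π → WinFor col p π

def LegalOn (p : Bool) (S : Set V) (σ : V → V) : Prop :=
  ∀ v ∈ S, own v = p → σ v ∈ S ∧ E v (σ v)

lemma winFor_tail (p : Bool) (π : ℕ → V) (k : ℕ)
    (h : WinFor col p (fun n => π (n + k))) : WinFor col p π := by
  unfold WinFor minCol at *
  rwa [infOcc_tail] at h

def dflt (S : Set V) : V → V := fun v => if h : ∃ w ∈ S, E v w then h.choose else v

lemma dflt_spec {S : Set V} (hS : Subarena E S) {v : V} (hv : v ∈ S) :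
    dflt E S v ∈ S ∧ E v (dflt E S v) := by
  have h : ∃ w ∈ S, E v w := hS v hv
  simp only [dflt, dif_pos h]
  exact ⟨h.choose_spec.1, h.choose_spec.2⟩

lemma stay {S W : Set V} {p : Bool} {σ : V → V} {π : ℕ → V}
    (hcl : ∀ v ∈ W, (own v = p → σ v ∈ W) ∧ (own v ≠ p → ∀ w ∈ S, E v w → w ∈ W))
    (hc : Consistent own E S p σ π) {k : ℕ} (hk : π k ∈ W) :
    ∀ n, k ≤ n → π n ∈ W := by
  intro n hn
  induction n with
  | zero => exact (Nat.le_zero.1 hn) ▸ hk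
  | succ n ih =>
    rcases Nat.lt_or_ge k (n + 1) with h | h
    · have hn' : π n ∈ W := ih (Nat.lt_succ_iff.1 h)
      by_cases ho : own (π n) = p
      · rw [hc.2.2 n ho]; exact (hcl _ hn').1 ho
      · exact (hcl _ hn').2 ho _ (hc.1 (n + 1)) (hc.2.1 n)
    · have : k = n + 1 := le_antisymm hn h
      exact this ▸ hk

/-! ### Attractors -/

variable (p : Bool) (S T : Set V)

def attrStep (X : Set V) : Set V :=
  T ∪ {v | v ∈ S ∧
    ((own v = p ∧ ∃ w, E v w ∧ w ∈ X) ∨ (own v ≠ p ∧ ∀ w ∈ S, E v w → w ∈ X))}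

def attrN (n : ℕ) : Set V := (attrStep own E p S T)^[n] T

def Attr : Set V := ⋃ n, attrN own E p S T n

variable {own E p S T}

lemma attrStep_mono {X Y : Set V} (h : X ⊆ Y) : attrStep own E p S T X ⊆ attrStep own E p S T Y := by
  rintro v (hv | ⟨hvS, ⟨ho, w, hw, hwX⟩ | ⟨ho, hall⟩⟩)
  · exact Or.inl hv
  · exact Or.inr ⟨hvS, Or.inl ⟨ho, w, hw, h hwX⟩⟩
  · exact Or.inr ⟨hvS, Or.inr ⟨ho, fun w hwS hE => h (hall w hwS hE)⟩⟩

lemma attrN_succ (n : ℕ) : attrN own E p S T (n + 1) = attrStep own E p S T (attrN own E p S T n) :=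
  Function.iterate_succ_apply' _ _ _

lemma attrN_zero : attrN own E p S T 0 = T := rfl

lemma attrN_le_succ (n : ℕ) : attrN own E p S T n ⊆ attrN own E p S T (n + 1) := by
  induction n with
  | zero => rw [attrN_succ, attrN_zero]; exact fun v hv => Or.inl hv
  | succ n ih => rw [attrN_succ, attrN_succ]; exact attrStep_mono ih

lemma attrN_mono {m n : ℕ} (h : m ≤ n) : attrN own E p S T m ⊆ attrN own E p S T n := by
  induction h with
  | refl => exact subset_rfl
  | step _ ih => exact fun v hv => attrN_le_succ _ (by exact ih hv)

lemma attrN_subset (hT : T ⊆ S) (n : ℕ) : attrN own E p S T n ⊆ S := by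
  induction n with
  | zero => exact hT
  | succ n ih =>
    rw [attrN_succ]
    rintro v (hv | ⟨hvS, _⟩)
    · exact hT hv
    · exact hvS

lemma subset_attr : T ⊆ Attr own E p S T := fun v hv => Set.mem_iUnion.2 ⟨0, hv⟩

lemma attr_subset (hT : T ⊆ S) : Attr own E p S T ⊆ S := by
  intro v hv
  rcases Set.mem_iUnion.1 hv with ⟨n, hn⟩
  exact attrN_subset hT n hn

def rank (v : V) : ℕ := sInf {n | v ∈ attrN own E p S T n}

variable (own E p S T)

lemma rank_mem {v : V} (hv : v ∈ Attr own E p S T) :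
    v ∈ attrN own E p S T (rank (own := own) (E := E) (p := p) (S := S) (T := T) v) := by
  rcases Set.mem_iUnion.1 hv with ⟨n, hn⟩
  exact Nat.sInf_mem (s := {m | v ∈ attrN own E p S T m}) ⟨n, hn⟩

variable {own E p S T}

lemma rank_le {v : V} {n : ℕ} (h : v ∈ attrN own E p S T n) :
    rank (own := own) (E := E) (p := p) (S := S) (T := T) v ≤ n := Nat.sInf_le h

lemma attr_ctrl {v w : V} (hv : v ∈ S) (ho : own v = p) (hE : E v w)
    (hw : w ∈ Attr own E p S T) : v ∈ Attr own E p S T := by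
  rcases Set.mem_iUnion.1 hw with ⟨n, hn⟩
  exact Set.mem_iUnion.2 ⟨n + 1, by
    rw [attrN_succ]; exact Or.inr ⟨hv, Or.inl ⟨ho, w, hE, hn⟩⟩⟩

lemma attr_forced {v : V} (hv : v ∈ S) (ho : own v ≠ p)
    (hall : ∀ w ∈ S, E v w → w ∈ Attr own E p S T) : v ∈ Attr own E p S T := by
  set R : V → ℕ := fun w => rank (own := own) (E := E) (p := p) (S := S) (T := T) w with hR
  set N : ℕ := Finset.univ.sup R with hN
  refine Set.mem_iUnion.2 ⟨N + 1, ?_⟩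
  rw [attrN_succ]
  refine Or.inr ⟨hv, Or.inr ⟨ho, fun w hwS hE => ?_⟩⟩
  have hw := hall w hwS hE
  exact attrN_mono (Finset.le_sup (Finset.mem_univ w)) (rank_mem own E p S T hw)

lemma attr_unfold {v : V} (hv : v ∈ Attr own E p S T) (hvT : v ∉ T) :
    v ∈ S ∧ ((own v = p ∧ ∃ w, E v w ∧ w ∈ attrN own E p S T
        (rank (own := own) (E := E) (p := p) (S := S) (T := T) v - 1)) ∨
      (own v ≠ p ∧ ∀ w ∈ S, E v w → w ∈ attrN own E p S T
        (rank (own := own) (E := E) (p := p) (S := S) (T := T) v - 1))) := by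
  set r := rank (own := own) (E := E) (p := p) (S := S) (T := T) v with hr
  have hmem : v ∈ attrN own E p S T r := rank_mem own E p S T hv
  have hr0 : r ≠ 0 := by
    intro h0
    rw [h0, attrN_zero] at hmem
    exact hvT hmem
  have hr1 : r - 1 + 1 = r := by omega
  rw [← hr1, attrN_succ] at hmem
  rcases hmem with h | ⟨hvS, hbr⟩
  · exact absurd h hvT
  · exact ⟨hvS, by simpa using hbr⟩

def attrStrat : V → V := fun v =>
  if h : ∃ w, E v w ∧ w ∈ attrN own E p S T
      (rank (own := own) (E := E) (p := p) (S := S) (T := T) v - 1) then h.choose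
  else dflt E S v

variable (own E p S T)

lemma attrStrat_spec {v : V} (hv : v ∈ Attr own E p S T) (hvT : v ∉ T) (ho : own v = p) :
    E v (attrStrat (own := own) (E := E) (p := p) (S := S) (T := T) v) ∧
      attrStrat (own := own) (E := E) (p := p) (S := S) (T := T) v ∈ attrN own E p S T
        (rank (own := own) (E := E) (p := p) (S := S) (T := T) v - 1) := by
  rcases attr_unfold hv hvT with ⟨_, ⟨_, w, hw, hwA⟩ | ⟨hop, _⟩⟩
  · have h : ∃ w, E v w ∧ w ∈ attrN own E p S T
        (rank (own := own) (E := E) (p := p) (S := S) (T := T) v - 1) := ⟨w, hw, hwA⟩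
    simp only [attrStrat, dif_pos h]
    exact h.choose_spec
  · exact absurd ho hop

lemma attrStrat_legal (hT : T ⊆ S) (hsub : Subarena E S) {v : V} (hv : v ∈ S) :
    attrStrat (own := own) (E := E) (p := p) (S := S) (T := T) v ∈ S ∧
      E v (attrStrat (own := own) (E := E) (p := p) (S := S) (T := T) v) := by
  unfold attrStrat
  split
  · next h => exact ⟨attrN_subset hT _ h.choose_spec.2, h.choose_spec.1⟩
  · exact dflt_spec E hsub hv

lemma attr_reach (π : ℕ → V) (hin : ∀ n, π n ∈ S) (hE : ∀ n, E (π n) (π (n + 1)))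
    (hσ : ∀ n, own (π n) = p → π n ∈ Attr own E p S T → π n ∉ T →
      π (n + 1) = attrStrat (own := own) (E := E) (p := p) (S := S) (T := T) (π n)) :
    ∀ r n, π n ∈ attrN own E p S T r → ∃ j, n ≤ j ∧ π j ∈ T := by
  intro r
  induction r with
  | zero => exact fun n h => ⟨n, le_rfl, h⟩
  | succ r ih =>
    intro n hn
    by_cases hT : π n ∈ T
    · exact ⟨n, le_rfl, hT⟩
    · have hA : π n ∈ Attr own E p S T := Set.mem_iUnion.2 ⟨r + 1, hn⟩
      have hrle : rank (own := own) (E := E) (p := p) (S := S) (T := T) (π n) ≤ r + 1 :=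
        rank_le hn
      have step : π (n + 1) ∈ attrN own E p S T r := by
        by_cases ho : own (π n) = p
        · rw [hσ n ho hA hT]
          exact attrN_mono (by omega) (attrStrat_spec own E p S T hA hT ho).2
        · rcases attr_unfold hA hT with ⟨_, ⟨hop, _⟩ | ⟨_, hall⟩⟩
          · exact absurd hop ho
          · exact attrN_mono (by omega) (hall _ (hin (n + 1)) (hE n))
      rcases ih (n + 1) step with ⟨j, hj, hjT⟩
      exact ⟨j, by omega, hjT⟩

end Game

/-! ### Positional determinacy of finite parity games -/

theorem determinacy {V : Type} [Fintype V] (own : V → Bool) (E : V → V → Prop) (col : V → ℕ) :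
    ∀ (n : ℕ) (S : Set V), S.ncard ≤ n → Subarena E S →
    ∃ (W : Bool → Set V) (σ : Bool → V → V),
      (W true ∪ W false = S) ∧
      (∀ r, LegalOn own E r S (σ r)) ∧
      (∀ r, ∀ v ∈ W r, (own v = r → σ r v ∈ W r) ∧ (own v ≠ r → ∀ w ∈ S, E v w → w ∈ W r)) ∧
      (∀ r, ∀ v ∈ W r, WinsIn own E col S r (σ r) v) := by
  intro n
  induction n with
  | zero =>
    intro S hcard _
    have hS : S = ∅ := (Set.ncard_eq_zero (Set.toFinite S)).1 (Nat.le_zero.1 hcard)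
    subst hS
    exact ⟨fun _ => ∅, fun _ => id, by simp, fun r v hv => absurd hv (by simp),
      fun r v hv => absurd hv (by simp), fun r v hv => absurd hv (by simp)⟩
  | succ n ih =>
    intro S hcard hsub
    rcases Set.eq_empty_or_nonempty S with rfl | ⟨v₀, hv₀⟩
    · exact ⟨fun _ => ∅, fun _ => id, by simp, fun r v hv => absurd hv (by simp),
        fun r v hv => absurd hv (by simp), fun r v hv => absurd hv (by simp)⟩
    have himg : (col '' S).Nonempty := ⟨col v₀, v₀, hv₀, rfl⟩
    obtain ⟨u₀, hu₀S, hu₀c⟩ := Nat.sInf_mem himg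
    set m := sInf (col '' S) with hm
    have hmle : ∀ v ∈ S, m ≤ col v := fun v hv => Nat.sInf_le ⟨v, hv, rfl⟩
    obtain ⟨p, hp⟩ : ∃ p : Bool, (Even m ↔ p = true) := ⟨decide (Even m), by simp⟩
    obtain ⟨q, hqdef⟩ : ∃ q : Bool, q = !p := ⟨!p, rfl⟩
    have hbq : ∀ b : Bool, b ≠ p ↔ b = q := by
      intro b; rw [hqdef]; cases b <;> cases p <;> simp
    have hbp : ∀ b : Bool, b ≠ q ↔ b = p := by
      intro b; rw [hqdef]; cases b <;> cases p <;> simp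
    set N : Set V := {v | v ∈ S ∧ col v = m} with hNdef
    have hNS : N ⊆ S := fun v hv => hv.1
    have hu₀N : u₀ ∈ N := ⟨hu₀S, hu₀c⟩
    set A := Attr own E p S N with hAdef
    have hNA : N ⊆ A := subset_attr
    have hAS : A ⊆ S := attr_subset hNS
    set S' := S \ A with hS'def
    have hS'sub : Subarena E S' := by
      intro v hv
      obtain ⟨hvS, hvA⟩ := hv
      by_cases ho : own v = p
      · obtain ⟨w, hwS, hE⟩ := hsub v hvS
        have hwA : w ∉ A := fun hwA => hvA (attr_ctrl hvS ho hE hwA)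
        exact ⟨w, ⟨hwS, hwA⟩, hE⟩
      · by_contra hc
        push_neg at hc
        refine hvA (attr_forced hvS ho fun w hwS hE => ?_)
        by_contra hwA
        exact hc w ⟨hwS, hwA⟩ hE
    have hcard' : S'.ncard ≤ n := by
      have hssub : S' ⊂ S := ⟨Set.diff_subset, fun hsup =>
        (hsup hu₀S).2 (hNA hu₀N)⟩
      have := Set.ncard_lt_ncard hssub (Set.toFinite S)
      omega
    obtain ⟨W', σ', hunion', hlegal', htrap', hwin'⟩ := ih S' hcard' hS'sub
    have hW'sub : ∀ r, W' r ⊆ S' := by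
      intro r v hv
      rw [← hunion']
      cases r
      · exact Or.inr hv
      · exact Or.inl hv
    have hPQ : W' p ∪ W' q = S' := by
      rw [hqdef]; cases p
      · rw [Set.union_comm]; exact hunion'
      · exact hunion'
    by_cases hWq : W' q = ∅
    -- Case 1 : player p wins everywhere on S
    · have hWp : W' p = S' := by rw [hWq, Set.union_empty] at hPQ; exact hPQ
      set σA := attrStrat (own := own) (E := E) (p := p) (S := S) (T := N) with hσA
      set σstar : V → V := fun v => if v ∈ A then σA v else σ' p v with hσstar
      have hlegstar : LegalOn own E p S σstar := by
        intro v hvS ho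
        by_cases hvA : v ∈ A
        · have := attrStrat_legal own E p S N hNS hsub hvS
          simp only [hσstar, if_pos hvA]
          exact ⟨this.1, this.2⟩
        · have hvS' : v ∈ W' p := hWp ▸ (⟨hvS, hvA⟩ : v ∈ S')
          have := hlegal' p v (hW'sub p hvS') ho
          simp only [hσstar, if_neg hvA]
          exact ⟨(this.1).1, this.2⟩
      have hwinstar : ∀ v ∈ S, WinsIn own E col S p σstar v := by
        intro v hvS π hπ0 hc
        by_cases hio : ∀ k, ∃ j, k ≤ j ∧ π j ∈ A
        · -- N is visited infinitely often, min color is m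
          have hσatt : ∀ k, own (π k) = p → π k ∈ Attr own E p S N → π k ∉ N →
              π (k + 1) = σA (π k) := by
            intro k ho hkA hkN
            rw [hc.2.2 k ho]
            simp only [hσstar, if_pos (show π k ∈ A from hAdef ▸ hkA)]
          have hNio : ∀ k, ∃ j, k ≤ j ∧ π j ∈ N := by
            intro k
            obtain ⟨j, hkj, hjA⟩ := hio k
            rcases Set.mem_iUnion.1 (show π j ∈ Attr own E p S N from hAdef ▸ hjA) with ⟨rr, hrr⟩
            obtain ⟨j', hj', hT⟩ := attr_reach own E p S N π hc.1 hc.2.1 hσatt rr j hrr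
            exact ⟨j', le_trans hkj hj', hT⟩
          have hNinf : {k | π k ∈ N}.Infinite := by
            apply Set.infinite_of_not_bddAbove
            rintro ⟨b, hb⟩
            obtain ⟨j, hj1, hj2⟩ := hNio (b + 1)
            exact absurd (hb hj2) (by omega)
          obtain ⟨w, hwN, hwInf⟩ := exists_infOcc_mem π N (Set.toFinite N) hNinf
          have hmin : minCol col π = m := by
            have h1 : m ∈ col '' InfOcc π := ⟨w, hwInf, hwN.2⟩
            have h2 : ∀ k ∈ col '' InfOcc π, m ≤ k := by
              rintro k ⟨u, huI, rfl⟩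
              obtain ⟨n0, hn0⟩ := Set.Infinite.nonempty huI
              exact hmle u (hn0 ▸ hc.1 n0)
            exact le_antisymm (Nat.sInf_le h1) (le_csInf ⟨m, h1⟩ h2)
          unfold WinFor
          rw [hmin]
          exact hp
        · push_neg at hio
          obtain ⟨k, hk⟩ := hio
          have hk' : ∀ j, k ≤ j → π j ∉ A := fun j hj hjA => (hk j hj) hjA
          apply winFor_tail col p π k
          have hπkS' : π k ∈ W' p := hWp ▸ (⟨hc.1 k, hk' k le_rfl⟩ : π k ∈ S')
          refine hwin' p (π k) hπkS' _ (by rw [Nat.zero_add]) ⟨fun j => ?_, fun j => ?_, fun j ho => ?_⟩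
          · exact (⟨hc.1 (j + k), hk' (j + k) (by omega)⟩ : π (j + k) ∈ S')
          · show E (π (j + k)) (π (j + 1 + k))
            have h1 : j + 1 + k = (j + k) + 1 := by omega
            rw [h1]
            exact hc.2.1 (j + k)
          · show π (j + 1 + k) = σ' p (π (j + k))
            have h1 : j + 1 + k = (j + k) + 1 := by omega
            rw [h1, hc.2.2 (j + k) ho]
            simp only [hσstar, if_neg (hk' (j + k) (by omega))]
      refine ⟨fun r => if r = p then S else ∅, fun r => if r = p then σstar else dflt E S,
        ?_, ?_, ?_, ?_⟩
      · rcases Bool.eq_false_or_eq_true p with hp' | hp' <;> subst hp' <;> simp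
      · intro r
        by_cases hr : r = p
        · subst hr; simpa using hlegstar
        · simp only [if_neg hr]
          exact fun v hvS _ => dflt_spec E hsub hvS
      · intro r v hv
        by_cases hr : r = p
        · subst hr
          simp only [if_pos rfl] at hv ⊢
          exact ⟨fun ho => (hlegstar v hv ho).1, fun _ w hwS _ => hwS⟩
        · simp only [if_neg hr] at hv
          exact absurd hv (Set.notMem_empty v)
      · intro r v hv
        by_cases hr : r = p
        · subst hr
          simp only [if_pos rfl] at hv ⊢
          exact hwinstar v hv
        · simp only [if_neg hr] at hv
          exact absurd hv (Set.notMem_empty v)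
    -- Case 2 : recurse on S minus B where B attracts to the opponent's region
    · obtain ⟨w₀, hw₀⟩ := Set.nonempty_iff_ne_empty.2 hWq
      set B := Attr own E q S (W' q) with hBdef
      have hW'qS' : W' q ⊆ S' := hW'sub q
      have hW'qS : W' q ⊆ S := fun v hv => (hW'qS' hv).1
      have hWB : W' q ⊆ B := subset_attr
      have hBS : B ⊆ S := attr_subset hW'qS
      set S'' := S \ B with hS''def
      have hS''sub : Subarena E S'' := by
        intro v hv
        obtain ⟨hvS, hvB⟩ := hv
        by_cases ho : own v = q
        · obtain ⟨w, hwS, hE⟩ := hsub v hvS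
          have hwB : w ∉ B := fun hwB => hvB (attr_ctrl hvS ho hE hwB)
          exact ⟨w, ⟨hwS, hwB⟩, hE⟩
        · by_contra hc
          push_neg at hc
          refine hvB (attr_forced hvS ho fun w hwS hE => ?_)
          by_contra hwB
          exact hc w ⟨hwS, hwB⟩ hE
      have hcard'' : S''.ncard ≤ n := by
        have hssub : S'' ⊂ S := ⟨Set.diff_subset, fun hsup =>
          (hsup (hW'qS hw₀)).2 (hWB hw₀)⟩
        have := Set.ncard_lt_ncard hssub (Set.toFinite S)
        omega
      obtain ⟨W'', σ'', hunion'', hlegal'', htrap'', hwin''⟩ := ih S'' hcard'' hS''sub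
      have hW''sub : ∀ r, W'' r ⊆ S'' := by
        intro r v hv
        rw [← hunion'']
        cases r
        · exact Or.inr hv
        · exact Or.inl hv
      have hPQ'' : W'' p ∪ W'' q = S'' := by
        rw [hqdef]; cases p
        · rw [Set.union_comm]; exact hunion''
        · exact hunion''
      -- the opponent's region of S' is closed under p-moves within S
      have hstar : ∀ v ∈ W' q, own v ≠ q → ∀ w ∈ S, E v w → w ∈ W' q := by
        intro v hv ho w hwS hE
        have hvS' : v ∈ S' := hW'qS' hv
        have hop : own v = p := (hbp (own v)).1 ho
        have hwA : w ∉ A := fun hwA => hvS'.2 (attr_ctrl hvS'.1 hop hE hwA)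
        exact (htrap' q v hv).2 ho w ⟨hwS, hwA⟩ hE
      set σB := attrStrat (own := own) (E := E) (p := q) (S := S) (T := W' q) with hσB
      set σq : V → V := fun v => if v ∈ W' q then σ' q v else if v ∈ B then σB v
        else if v ∈ W'' q then σ'' q v else dflt E S v with hσq
      set σp : V → V := fun v => if v ∈ W'' p then σ'' p v else dflt E S v with hσp
      set Wq : Set V := B ∪ W'' q with hWqdef
      set Wp : Set V := W'' p with hWpdef
      have hWpS : Wp ⊆ S := fun v hv => ((hW''sub p) hv).1
      have hWqS : Wq ⊆ S := by
        rintro v (hv | hv)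
        · exact hBS hv
        · exact ((hW''sub q) hv).1
      -- trap property for p on Wp
      have htrapP : ∀ v ∈ Wp, (own v = p → σp v ∈ Wp) ∧
          (own v ≠ p → ∀ w ∈ S, E v w → w ∈ Wp) := by
        intro v hv
        constructor
        · intro ho
          simp only [hσp, if_pos (show v ∈ Wp from hv)]
          exact (htrap'' p v hv).1 ho
        · intro ho w hwS hE
          have hoq : own v = q := (hbq (own v)).1 ho
          by_cases hwB : w ∈ B
          · exact absurd (attr_ctrl (hWpS hv) hoq hE hwB) ((hW''sub p) hv).2
          · exact (htrap'' p v hv).2 ho w ⟨hwS, hwB⟩ hE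
      -- trap property for q on Wq
      have htrapQ : ∀ v ∈ Wq, (own v = q → σq v ∈ Wq) ∧
          (own v ≠ q → ∀ w ∈ S, E v w → w ∈ Wq) := by
        intro v hv
        constructor
        · intro ho
          by_cases h1 : v ∈ W' q
          · simp only [hσq, if_pos h1]
            exact Or.inl (hWB ((htrap' q v h1).1 ho))
          by_cases h2 : v ∈ B
          · simp only [hσq, if_neg h1, if_pos h2]
            have := attrStrat_spec own E q S (W' q) (show v ∈ Attr own E q S (W' q) from hBdef ▸ h2) h1 ho
            exact Or.inl (Set.mem_iUnion.2 ⟨_, this.2⟩)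
          · have h3 : v ∈ W'' q := hv.resolve_left h2
            simp only [hσq, if_neg h1, if_neg h2, if_pos h3]
            exact Or.inr ((htrap'' q v h3).1 ho)
        · intro ho w hwS hE
          by_cases h2 : v ∈ B
          · by_cases h1 : v ∈ W' q
            · exact Or.inl (hWB (hstar v h1 ho w hwS hE))
            · rcases attr_unfold (show v ∈ Attr own E q S (W' q) from hBdef ▸ h2) h1 with
                ⟨_, ⟨hoq, _⟩ | ⟨_, hall⟩⟩
              · exact absurd hoq ho
              · exact Or.inl (Set.mem_iUnion.2 ⟨_, hall w hwS hE⟩)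
          · have h3 : v ∈ W'' q := hv.resolve_left h2
            by_cases hwB : w ∈ B
            · exact Or.inl hwB
            · exact Or.inr ((htrap'' q v h3).2 ho w ⟨hwS, hwB⟩ hE)
      -- winning for p on Wp
      have hwinP : ∀ v ∈ Wp, WinsIn own E col S p σp v := by
        intro v hv π hπ0 hc
        have hall : ∀ j, π j ∈ Wp :=
          fun j => stay own E htrapP hc (k := 0) (hπ0 ▸ hv) j (Nat.zero_le j)
        refine hwin'' p v hv π hπ0 ⟨fun j => (hW''sub p) (hall j), hc.2.1, fun j ho => ?_⟩
        rw [hc.2.2 j ho]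
        simp only [hσp, if_pos (show π j ∈ Wp from hall j)]
      -- winning for q on Wq
      have hwinQ : ∀ v ∈ Wq, WinsIn own E col S q σq v := by
        intro v hv π hπ0 hc
        by_cases hreach : ∃ k, π k ∈ W' q
        · obtain ⟨k, hkW⟩ := hreach
          have hcloW' : ∀ u ∈ W' q, (own u = q → σq u ∈ W' q) ∧
              (own u ≠ q → ∀ w ∈ S, E u w → w ∈ W' q) := by
            intro u hu
            refine ⟨fun ho => ?_, fun ho w hwS hE => hstar u hu ho w hwS hE⟩
            simp only [hσq, if_pos hu]
            exact (htrap' q u hu).1 ho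
          have hstayW' : ∀ j, k ≤ j → π j ∈ W' q := stay own E hcloW' hc hkW
          apply winFor_tail col q π k
          refine hwin' q (π k) hkW _ (by rw [Nat.zero_add]) ⟨fun j => hW'qS' (hstayW' (j + k) (by omega)),
            fun j => ?_, fun j ho => ?_⟩
          · show E (π (j + k)) (π (j + 1 + k))
            have h1 : j + 1 + k = (j + k) + 1 := by omega
            rw [h1]; exact hc.2.1 (j + k)
          · show π (j + 1 + k) = σ' q (π (j + k))
            have h1 : j + 1 + k = (j + k) + 1 := by omega
            rw [h1, hc.2.2 (j + k) ho]
            simp only [hσq, if_pos (hstayW' (j + k) (by omega))]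
        · push_neg at hreach
          have hσatt : ∀ j, own (π j) = q → π j ∈ Attr own E q S (W' q) → π j ∉ W' q →
              π (j + 1) = σB (π j) := by
            intro j ho hjB hjW
            rw [hc.2.2 j ho]
            simp only [hσq, if_neg (hreach j), if_pos (show π j ∈ B from hBdef ▸ hjB)]
          have hnB : ∀ j, π j ∉ B := by
            intro j hjB
            rcases Set.mem_iUnion.1 (show π j ∈ Attr own E q S (W' q) from hBdef ▸ hjB) with ⟨rr, hrr⟩
            obtain ⟨j', hjj, hjT⟩ := attr_reach own E q S (W' q) π hc.1 hc.2.1 hσatt rr j hrr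
            exact hreach j' hjT
          have hall : ∀ j, π j ∈ W'' q := by
            intro j
            have := stay own E htrapQ hc (k := 0) (hπ0 ▸ hv) j (Nat.zero_le j)
            exact this.resolve_left (hnB j)
          refine hwin'' q (π 0) (hall 0) π rfl ⟨fun j => (hW''sub q) (hall j), hc.2.1,
            fun j ho => ?_⟩
          rw [hc.2.2 j ho]
          simp only [hσq, if_neg (hreach j), if_neg (hnB j), if_pos (show π j ∈ W'' q from hall j)]
      -- assemble
      have hlegP : LegalOn own E p S σp := by
        intro v hvS ho
        by_cases hv : v ∈ W'' p
        · have := hlegal'' p v ((hW''sub p) hv) ho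
          simp only [hσp, if_pos (show v ∈ Wp from hv)]
          exact ⟨(this.1).1, this.2⟩
        · simp only [hσp, if_neg (show v ∉ Wp from hv)]
          exact dflt_spec E hsub hvS
      have hlegQ : LegalOn own E q S σq := by
        intro v hvS ho
        by_cases h1 : v ∈ W' q
        · have := hlegal' q v (hW'qS' h1) ho
          simp only [hσq, if_pos h1]
          exact ⟨(this.1).1, this.2⟩
        by_cases h2 : v ∈ B
        · have := attrStrat_legal own E q S (W' q) hW'qS hsub hvS
          simp only [hσq, if_neg h1, if_pos h2]
          exact this
        by_cases h3 : v ∈ W'' q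
        · have := hlegal'' q v ((hW''sub q) h3) ho
          simp only [hσq, if_neg h1, if_neg h2, if_pos h3]
          exact ⟨(this.1).1, this.2⟩
        · simp only [hσq, if_neg h1, if_neg h2, if_neg h3]
          exact dflt_spec E hsub hvS
      refine ⟨fun r => if r = p then Wp else Wq, fun r => if r = p then σp else σq,
        ?_, ?_, ?_, ?_⟩
      · have hU : Wp ∪ Wq = S := by
          rw [hWpdef, hWqdef, Set.union_comm B (W'' q), ← Set.union_assoc, hPQ'',
            hS''def, Set.diff_union_of_subset hBS]
        rcases Bool.eq_false_or_eq_true p with hp' | hp'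
        · subst hp'
          exact hU
        · subst hp'
          show Wq ∪ Wp = S
          rw [Set.union_comm]
          exact hU
      · intro r
        by_cases hr : r = p
        · subst hr; simpa using hlegP
        · have hrq : r = q := (hbq r).1 hr
          subst hrq
          simpa [if_neg hr] using hlegQ
      · intro r v hv
        by_cases hr : r = p
        · subst hr
          simp only [if_pos rfl] at hv ⊢
          exact htrapP v hv
        · have hrq : r = q := (hbq r).1 hr
          subst hrq
          simp only [if_neg hr] at hv ⊢
          exact htrapQ v hv
      · intro r v hv
        by_cases hr : r = p
        · subst hr
          simp only [if_pos rfl] at hv ⊢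
          exact hwinP v hv
        · have hrq : r = q := (hbq r).1 hr
          subst hrq
          simp only [if_neg hr] at hv ⊢
          exact hwinQ v hv


/-! ### The game of a parity automaton -/

section App

variable {α β Q : Type} [Fintype α] [Fintype β] [Nonempty α] [Nonempty β] [Fintype Q]

def gOwn : Q ⊕ (Q × α) → Bool := fun v => match v with | .inl _ => false | .inr _ => true

def gE (δ : Q → α × β → Q) : Q ⊕ (Q × α) → Q ⊕ (Q × α) → Prop := fun v w =>
  match v, w with
  | .inl q, .inr z => z.1 = q
  | .inr z, .inl q' => ∃ b, q' = δ z.1 (z.2, b)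
  | _, _ => False

def gCol (col : Q → ℕ) : Q ⊕ (Q × α) → ℕ := fun v => match v with
  | .inl q => col q
  | .inr z => col z.1

variable (δ : Q → α × β → Q) (q₀ : Q) (col : Q → ℕ)

def runSeq (a : ℕ → α × β) : ℕ → Q := fun n => ((List.range n).map a).foldl δ q₀

def playSeq (a : ℕ → α × β) (x : ℕ → α) : ℕ → Q ⊕ (Q × α) := fun n =>
  if n % 2 = 0 then .inl (runSeq δ q₀ a (n / 2))
  else .inr (runSeq δ q₀ a (n / 2), x (n / 2))

lemma foldl_range_succ {Q' γ : Type} (f : Q' → γ → Q') (g : ℕ → γ) (q : Q') (n : ℕ) :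
    ((List.range (n + 1)).map g).foldl f q = f (((List.range n).map g).foldl f q) (g n) := by
  rw [List.range_succ, List.map_append, List.foldl_append]
  rfl

lemma runSeq_succ (a : ℕ → α × β) (n : ℕ) :
    runSeq δ q₀ a (n + 1) = δ (runSeq δ q₀ a n) (a n) :=
  foldl_range_succ δ a q₀ n

lemma playSeq_even (a : ℕ → α × β) (x : ℕ → α) (m : ℕ) :
    playSeq δ q₀ a x (2 * m) = .inl (runSeq δ q₀ a m) := by
  have h0 : (2 * m) % 2 = 0 := by omega
  have h1 : (2 * m) / 2 = m := by omega
  simp only [playSeq, if_pos h0, h1]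

lemma playSeq_odd (a : ℕ → α × β) (x : ℕ → α) (m : ℕ) :
    playSeq δ q₀ a x (2 * m + 1) = .inr (runSeq δ q₀ a m, x m) := by
  have h0 : ¬((2 * m + 1) % 2 = 0) := by omega
  have h1 : (2 * m + 1) / 2 = m := by omega
  simp only [playSeq, if_neg h0, h1]

lemma play_consistent (a : ℕ → α × β) (x : ℕ → α) (hx : ∀ n, (a n).1 = x n) :
    ∀ n, gE δ (playSeq δ q₀ a x n) (playSeq δ q₀ a x (n + 1)) := by
  intro n
  rcases Nat.even_or_odd n with ⟨m, hm⟩ | ⟨m, hm⟩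
  · have h1 : n = 2 * m := by omega
    rw [h1, playSeq_even, playSeq_odd]
    show (runSeq δ q₀ a m, x m).1 = runSeq δ q₀ a m
    rfl
  · have h1 : n = 2 * m + 1 := by omega
    have h2 : 2 * m + 1 + 1 = 2 * (m + 1) := by omega
    rw [h1, h2, playSeq_even, playSeq_odd]
    refine ⟨(a m).2, ?_⟩
    rw [runSeq_succ]
    congr 1
    rw [← hx m]

lemma minCol_play (a : ℕ → α × β) (x : ℕ → α) :
    (Even (minCol (gCol col) (playSeq δ q₀ a x)) ↔ ParityAccepts δ q₀ col a) := by
  suffices h : gCol col '' InfOcc (playSeq δ q₀ a x) =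
      {k | ∃ q, {n | ((List.range (n + 1)).map a).foldl δ q₀ = q}.Infinite ∧ col q = k} by
    unfold minCol ParityAccepts
    rw [h]
  have hshift : ∀ q : Q, {n | runSeq δ q₀ a (n + 1) = q}.Infinite ↔
      {n | runSeq δ q₀ a n = q}.Infinite :=
    fun q => Set.ext_iff.1 (infOcc_tail (runSeq δ q₀ a) 1) q
  have hinl : ∀ q : Q, {n | playSeq δ q₀ a x n = Sum.inl q} =
      (fun m => 2 * m) '' {m | runSeq δ q₀ a m = q} := by
    intro q
    ext n
    constructor
    · intro hn
      have he : n % 2 = 0 := by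
        by_contra h
        simp only [Set.mem_setOf_eq, playSeq, if_neg h] at hn
        exact Sum.inr_ne_inl hn
      refine ⟨n / 2, ?_, by show 2 * (n / 2) = n; omega⟩
      simp only [Set.mem_setOf_eq, playSeq, if_pos he] at hn
      exact Sum.inl.inj hn
    · rintro ⟨m, hm, rfl⟩
      show playSeq δ q₀ a x (2 * m) = _
      rw [playSeq_even]
      exact congrArg Sum.inl hm
  have hinr : ∀ z : Q × α, {n | playSeq δ q₀ a x n = Sum.inr z} ⊆
      (fun m => 2 * m + 1) '' {m | runSeq δ q₀ a m = z.1} := by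
    intro z n hn
    have he : ¬(n % 2 = 0) := by
      intro h
      simp only [Set.mem_setOf_eq, playSeq, if_pos h] at hn
      exact Sum.inl_ne_inr hn
    refine ⟨n / 2, ?_, by show 2 * (n / 2) + 1 = n; omega⟩
    simp only [Set.mem_setOf_eq, playSeq, if_neg he] at hn
    simpa using congrArg Prod.fst (Sum.inr.inj hn)
  ext k
  simp only [Set.mem_image, Set.mem_setOf_eq]
  constructor
  · rintro ⟨v, hvI, rfl⟩
    cases v with
    | inl q =>
      refine ⟨q, ?_, rfl⟩
      have h1 : ({m | runSeq δ q₀ a m = q}).Infinite := by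
        apply Set.Infinite.of_image (fun m => 2 * m)
        rw [← hinl q]
        exact hvI
      exact (hshift q).2 h1
    | inr z =>
      refine ⟨z.1, ?_, rfl⟩
      have hvI' : ({n | playSeq δ q₀ a x n = Sum.inr z}).Infinite := hvI
      have himg : ((fun m => 2 * m + 1) '' {m | runSeq δ q₀ a m = z.1}).Infinite :=
        hvI'.mono (hinr z)
      exact (hshift z.1).2 (Set.Infinite.of_image _ himg)
  · rintro ⟨q, hq, rfl⟩
    refine ⟨Sum.inl q, ?_, rfl⟩
    have h1 : {m | runSeq δ q₀ a m = q}.Infinite := (hshift q).1 hq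
    show ({n | playSeq δ q₀ a x n = Sum.inl q}).Infinite
    rw [hinl q]
    exact h1.image (fun u _ w _ h => by omega)

end App

end

end BL

/-- The Büchi–Landweber theorem in automaton form: for a finite deterministic
parity automaton `A` over `α × β` defining `W ⊆ (ℕ → α) × (ℕ → β)`, either
Player II has a finite-state winning strategy (a finite-state causal `F` with
`(X, F X) ∈ W` for all `X`) or Player I has one (a finite-state strongly
causal `G` with `(G Y, Y) ∉ W` for all `Y`). -/
theorem buchi_landweber {α β : Type} [Fintype α] [Fintype β]
    [Nonempty α] [Nonempty β]
    {Q : Type} [Fintype Q] (δ : Q → α × β → Q) (q₀ : Q) (col : Q → ℕ)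
    (W : Set ((ℕ → α) × (ℕ → β)))
    (hW : ∀ (x : ℕ → α) (y : ℕ → β),
      (x, y) ∈ W ↔ ParityAccepts δ q₀ col (fun n => (x n, y n))) :
    (∃ F : (ℕ → α) → (ℕ → β), FiniteStateCausal F ∧ Causal F ∧
      ∀ X, (X, F X) ∈ W) ∨
    (∃ G : (ℕ → β) → (ℕ → α), FiniteStateStronglyCausal G ∧ StronglyCausal G ∧
      ∀ Y, (G Y, Y) ∉ W) := by
  classical
  have hsub : BL.Subarena (BL.gE δ) (Set.univ : Set (Q ⊕ (Q × α))) := by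
    intro v _
    cases v with
    | inl q => exact ⟨Sum.inr (q, Classical.arbitrary α), Set.mem_univ _, rfl⟩
    | inr z => exact ⟨Sum.inl (δ z.1 (z.2, Classical.arbitrary β)), Set.mem_univ _,
        Classical.arbitrary β, rfl⟩
  obtain ⟨Wr, σf, hunion, hlegal, htrap, hwin⟩ :=
    BL.determinacy (V := Q ⊕ (Q × α)) BL.gOwn (BL.gE δ) (BL.gCol col)
      ((Set.univ : Set (Q ⊕ (Q × α))).ncard) Set.univ le_rfl hsub
  have hmem : (Sum.inl q₀ : Q ⊕ (Q × α)) ∈ Wr true ∪ Wr false := by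
    rw [hunion]; exact Set.mem_univ _
  rcases hmem with hmem | hmem
  · -- Player II has a finite-state winning strategy
    left
    set σ := σf true with hσ
    have hout : ∀ z : Q × α, ∃ b, σ (Sum.inr z) = Sum.inl (δ z.1 (z.2, b)) := by
      intro z
      have hleg : BL.gE δ (Sum.inr z) (σ (Sum.inr z)) :=
        (hlegal true (Sum.inr z) (Set.mem_univ _) rfl).2
      cases hσz : σ (Sum.inr z) with
      | inl q' =>
        rw [hσz] at hleg
        obtain ⟨b, hb⟩ := hleg
        exact ⟨b, by rw [hb]⟩
      | inr z' =>
        rw [hσz] at hleg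
        exact hleg.elim
    let out : Q → α → β := fun q a0 => (hout (q, a0)).choose
    have houtspec : ∀ q a0, σ (Sum.inr (q, a0)) = Sum.inl (δ q (a0, out q a0)) :=
      fun q a0 => (hout (q, a0)).choose_spec
    let δ' : Q → α → Q := fun q a0 => δ q (a0, out q a0)
    let F : (ℕ → α) → (ℕ → β) := fun x n => out (((List.range n).map x).foldl δ' q₀) (x n)
    refine ⟨F, ⟨Q, inferInstance, δ', q₀, out, fun _ _ => rfl⟩, ?_, ?_⟩
    · intro x y t hagree s hst
      have hlist : (List.range s).map x = (List.range s).map y :=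
        List.map_congr_left fun i hi =>
          hagree i (le_trans (Nat.le_of_lt (List.mem_range.1 hi)) hst)
      show out (((List.range s).map x).foldl δ' q₀) (x s) =
        out (((List.range s).map y).foldl δ' q₀) (y s)
      rw [hlist, hagree s hst]
    · intro X
      rw [hW]
      set a : ℕ → α × β := fun i => (X i, F X i) with ha
      have key : ∀ n, ((List.range n).map X).foldl δ' q₀ = BL.runSeq δ q₀ a n := by
        intro n
        induction n with
        | zero => rfl
        | succ n ih =>
          rw [BL.foldl_range_succ, BL.runSeq_succ]
          show δ (((List.range n).map X).foldl δ' q₀)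
              (X n, out (((List.range n).map X).foldl δ' q₀) (X n)) = _
          rw [ih]
          show _ = δ (BL.runSeq δ q₀ a n) (X n, F X n)
          congr 2
          show out (BL.runSeq δ q₀ a n) (X n) = out (((List.range n).map X).foldl δ' q₀) (X n)
          rw [ih]
      have hFX : ∀ n, F X n = out (BL.runSeq δ q₀ a n) (X n) := by
        intro n
        show out (((List.range n).map X).foldl δ' q₀) (X n) = _
        rw [key n]
      have hcons : BL.Consistent BL.gOwn (BL.gE δ) Set.univ true σ (BL.playSeq δ q₀ a X) := by
        refine ⟨fun n => Set.mem_univ _, BL.play_consistent δ q₀ a X (fun n => rfl), ?_⟩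
        intro n ho
        rcases Nat.even_or_odd n with ⟨m, hm⟩ | ⟨m, hm⟩
        · exfalso
          have h1 : n = 2 * m := by omega
          rw [h1, BL.playSeq_even] at ho
          exact Bool.noConfusion ho
        · have h1 : n = 2 * m + 1 := by omega
          have h2 : 2 * m + 1 + 1 = 2 * (m + 1) := by omega
          rw [h1, h2, BL.playSeq_even, BL.playSeq_odd, houtspec]
          congr 1
          rw [BL.runSeq_succ]
          show δ _ (X m, F X m) = _
          rw [hFX m]
      have hπ0 : BL.playSeq δ q₀ a X 0 = Sum.inl q₀ := by
        have := BL.playSeq_even δ q₀ a X 0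
        simpa [BL.runSeq] using this
      have hwf : Even (BL.minCol (BL.gCol col) (BL.playSeq δ q₀ a X)) ↔ true = true :=
        hwin true (Sum.inl q₀) hmem (BL.playSeq δ q₀ a X) hπ0 hcons
      exact (BL.minCol_play δ q₀ col a X).1 (hwf.2 rfl)
  · -- Player I has a finite-state winning strategy
    right
    set τ := σf false with hτ
    have hout : ∀ q : Q, ∃ a0 : α, τ (Sum.inl q) = Sum.inr (q, a0) := by
      intro q
      have hleg : BL.gE δ (Sum.inl q) (τ (Sum.inl q)) :=
        (hlegal false (Sum.inl q) (Set.mem_univ _) rfl).2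
      cases hτq : τ (Sum.inl q) with
      | inl q' =>
        rw [hτq] at hleg
        exact hleg.elim
      | inr z =>
        rw [hτq] at hleg
        exact ⟨z.2, by rw [← hleg]⟩
    let out' : Q → α := fun q => (hout q).choose
    have houtspec : ∀ q, τ (Sum.inl q) = Sum.inr (q, out' q) := fun q => (hout q).choose_spec
    let δ'' : Q → β → Q := fun q b => δ q (out' q, b)
    let G : (ℕ → β) → (ℕ → α) := fun y n => out' (((List.range n).map y).foldl δ'' q₀)
    refine ⟨G, ⟨Q, inferInstance, δ'', q₀, out', fun _ _ => rfl⟩, ?_, ?_⟩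
    · intro x y t hagree
      have hlist : (List.range t).map x = (List.range t).map y :=
        List.map_congr_left fun i hi => hagree i (List.mem_range.1 hi)
      show out' (((List.range t).map x).foldl δ'' q₀) =
        out' (((List.range t).map y).foldl δ'' q₀)
      rw [hlist]
    · intro Y hYW
      rw [hW] at hYW
      set a : ℕ → α × β := fun i => (G Y i, Y i) with ha
      have key : ∀ n, ((List.range n).map Y).foldl δ'' q₀ = BL.runSeq δ q₀ a n := by
        intro n
        induction n with
        | zero => rfl
        | succ n ih =>
          rw [BL.foldl_range_succ, BL.runSeq_succ]
          show δ (((List.range n).map Y).foldl δ'' q₀)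
              (out' (((List.range n).map Y).foldl δ'' q₀), Y n) = _
          rw [ih]
          show δ (BL.runSeq δ q₀ a n) (out' (BL.runSeq δ q₀ a n), Y n) =
            δ (BL.runSeq δ q₀ a n) (out' (((List.range n).map Y).foldl δ'' q₀), Y n)
          rw [ih]
      have hGY : ∀ n, G Y n = out' (BL.runSeq δ q₀ a n) := by
        intro n
        show out' (((List.range n).map Y).foldl δ'' q₀) = _
        rw [key n]
      have hcons : BL.Consistent BL.gOwn (BL.gE δ) Set.univ false τ
          (BL.playSeq δ q₀ a (G Y)) := by
        refine ⟨fun n => Set.mem_univ _, BL.play_consistent δ q₀ a (G Y) (fun n => rfl), ?_⟩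
        intro n ho
        rcases Nat.even_or_odd n with ⟨m, hm⟩ | ⟨m, hm⟩
        · have h1 : n = 2 * m := by omega
          have h2 : 2 * m + 1 = 2 * m + 1 := rfl
          rw [h1, BL.playSeq_even, BL.playSeq_odd, houtspec]
          congr 2
          exact hGY m
        · exfalso
          have h1 : n = 2 * m + 1 := by omega
          rw [h1, BL.playSeq_odd] at ho
          exact Bool.noConfusion ho
      have hπ0 : BL.playSeq δ q₀ a (G Y) 0 = Sum.inl q₀ := by
        have := BL.playSeq_even δ q₀ a (G Y) 0
        simpa [BL.runSeq] using this
      have hwf : Even (BL.minCol (BL.gCol col) (BL.playSeq δ q₀ a (G Y))) ↔ false = true :=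
        hwin false (Sum.inl q₀) hmem (BL.playSeq δ q₀ a (G Y)) hπ0 hcons
      have hnot : ¬ Even (BL.minCol (BL.gCol col) (BL.playSeq δ q₀ a (G Y))) :=
        fun h => Bool.noConfusion (hwf.1 h)
      exact hnot ((BL.minCol_play δ q₀ col a (G Y)).2 hYW)
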